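/- For every s ∈ (0,1) and every λ ≥ 0, one has λ^s = (1/Γ(-s)) ∫₀^∞ (e^{-tλ} - 1)/t^{s+1} dt, where Γ(-s) = Γ(1-s)/(-s). -/

import Mathlib

open MeasureTheory Set Real Filter Topology

lemma bal_one_sub_exp_le {x : ℝ} : 1 - Real.exp (-x) ≤ x := by
  nlinarith [Real.add_one_le_exp (-x)]

lemma bal_abs_exp_le_self {x : ℝ} (hx : 0 ≤ x) : |Real.exp (-x) - 1| ≤ x := by
  have h1 := Real.add_one_le_exp (-x)
  have h2 : Real.exp (-x) ≤ 1 := Real.exp_le_one_iff.mpr (by linarith)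
  rw [abs_sub_comm, abs_of_nonneg (by linarith)]
  linarith

lemma bal_abs_exp_le_one {x : ℝ} (hx : 0 ≤ x) : |Real.exp (-x) - 1| ≤ 1 := by
  have h2 : Real.exp (-x) ≤ 1 := Real.exp_le_one_iff.mpr (by linarith)
  have h3 := Real.exp_pos (-x)
  rw [abs_sub_comm, abs_of_nonneg (by linarith)]
  linarith

lemma bal_integrable {s lam : ℝ} (hs0 : 0 < s) (hs1 : s < 1) (hlam : 0 ≤ lam) :
    IntegrableOn (fun t : ℝ => (Real.exp (-t * lam) - 1) / t ^ (s + 1)) (Ioi 0) volume := by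
  have hmeas : AEStronglyMeasurable
      (fun t : ℝ => (Real.exp (-t * lam) - 1) / t ^ (s + 1)) (volume.restrict (Ioi 0)) := by
    apply ContinuousOn.aestronglyMeasurable ?_ measurableSet_Ioi
    apply ContinuousOn.div
    · fun_prop
    · exact fun t ht =>
        (Real.continuousAt_rpow_const t _ (Or.inl (ne_of_gt ht))).continuousWithinAt
    · exact fun t ht => ne_of_gt (Real.rpow_pos_of_pos ht _)
  rw [← Ioc_union_Ioi_eq_Ioi (zero_le_one (α := ℝ)), integrableOn_union]
  constructor
  · have hb : IntegrableOn (fun t : ℝ => lam * t ^ (-s)) (Ioc (0:ℝ) 1) volume :=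
      ((intervalIntegral.intervalIntegrable_rpow' (by linarith : (-1:ℝ) < -s)).1).const_mul lam
    refine Integrable.mono' hb
      (hmeas.mono_measure (Measure.restrict_mono Ioc_subset_Ioi_self le_rfl)) ?_
    filter_upwards [self_mem_ae_restrict measurableSet_Ioc] with t ht
    have ht0 : (0:ℝ) < t := ht.1
    have htp : (0:ℝ) < t ^ (s + 1) := Real.rpow_pos_of_pos ht0 _
    rw [Real.norm_eq_abs, abs_div, abs_of_pos htp]
    have hnum : |Real.exp (-t * lam) - 1| ≤ t * lam := by
      have := bal_abs_exp_le_self (mul_nonneg ht0.le hlam)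
      rwa [← neg_mul] at this
    calc |Real.exp (-t * lam) - 1| / t ^ (s + 1) ≤ (t * lam) / t ^ (s + 1) := by
          gcongr
      _ = lam * t ^ (-s) := by
          rw [show (-s) = 1 - (s + 1) by ring, Real.rpow_sub ht0, Real.rpow_one]
          ring
  · have hb : IntegrableOn (fun t : ℝ => t ^ (-(s+1))) (Ioi (1:ℝ)) volume :=
      integrableOn_Ioi_rpow_of_lt (by linarith) one_pos
    refine Integrable.mono' hb
      (hmeas.mono_measure (Measure.restrict_mono (Ioi_subset_Ioi zero_le_one) le_rfl)) ?_
    filter_upwards [self_mem_ae_restrict measurableSet_Ioi] with t ht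
    have ht0 : (0:ℝ) < t := lt_trans one_pos ht
    have htp : (0:ℝ) < t ^ (s + 1) := Real.rpow_pos_of_pos ht0 _
    have hnum : |Real.exp (-t * lam) - 1| ≤ 1 := by
      have := bal_abs_exp_le_one (mul_nonneg ht0.le hlam)
      rwa [← neg_mul] at this
    rw [Real.norm_eq_abs, abs_div, abs_of_pos htp]
    calc |Real.exp (-t * lam) - 1| / t ^ (s + 1) ≤ 1 / t ^ (s + 1) := by gcongr
      _ = t ^ (-(s+1)) := by rw [Real.rpow_neg ht0.le, one_div]

/-- Balakrishnan integral representation of fractional powers: for `s ∈ (0,1)` and `λ ≥ 0`,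
`λ^s = (1/Γ(-s)) ∫₀^∞ (e^{-tλ} - 1)/t^{s+1} dt`, where `Γ(-s) = Γ(1-s)/(-s)`. -/
theorem balakrishnan_rpow (s lam : ℝ) (hs : s ∈ Ioo (0 : ℝ) 1) (hlam : 0 ≤ lam) :
    IntegrableOn (fun t : ℝ => (Real.exp (-t * lam) - 1) / t ^ (s + 1)) (Ioi 0) volume ∧
    lam ^ s =
      (1 / (Real.Gamma (1 - s) / (-s))) *
        ∫ t in Ioi (0 : ℝ), (Real.exp (-t * lam) - 1) / t ^ (s + 1) := by
  obtain ⟨hs0, hs1⟩ := hs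
  rcases eq_or_lt_of_le hlam with h0 | hlam'
  · have hfun : (fun t : ℝ => (Real.exp (-t * lam) - 1) / t ^ (s + 1)) = fun _ => (0:ℝ) := by
      funext t; rw [← h0]; simp
    rw [hfun, ← h0]
    refine ⟨integrableOn_zero, ?_⟩
    simp [Real.zero_rpow (ne_of_gt hs0)]
  · have h_int := bal_integrable hs0 hs1 hlam
    refine ⟨h_int, ?_⟩
    set g : ℝ → ℝ := fun t => (Real.exp (-t * lam) - 1) * t ^ (-s) with hg
    set p1 : ℝ → ℝ := fun t => Real.exp (-t * lam) * (-lam) * t ^ (-s) with hp1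
    set p2 : ℝ → ℝ := fun t => (Real.exp (-t * lam) - 1) * (-s * t ^ (-s - 1)) with hp2
    -- derivative
    have hderiv : ∀ t ∈ Ioi (0:ℝ), HasDerivAt g (p1 t + p2 t) t := by
      intro t ht
      have hbase : HasDerivAt (fun t : ℝ => -t * lam) (-lam) t := by
        simpa using ((hasDerivAt_id t).neg.mul_const lam)
      have h1 : HasDerivAt (fun t : ℝ => Real.exp (-t * lam) - 1)
          (Real.exp (-t * lam) * -lam) t := hbase.exp.sub_const 1
      have h2 : HasDerivAt (fun t : ℝ => t ^ (-s)) (-s * t ^ (-s - 1)) t :=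
        Real.hasDerivAt_rpow_const (Or.inl (ne_of_gt ht))
      have h3 := h1.mul h2
      exact h3
    -- continuity at 0 from the right
    have hcont : ContinuousWithinAt g (Ici (0:ℝ)) 0 := by
      have hg0 : g 0 = 0 := by simp [hg]
      rw [ContinuousWithinAt, hg0]
      have hB : Tendsto (fun t : ℝ => lam * t ^ (1 - s)) (𝓝[Ici 0] (0:ℝ)) (𝓝 0) := by
        have h1 : Tendsto (fun t : ℝ => t ^ (1 - s)) (𝓝[Ici 0] (0:ℝ)) (𝓝 ((0:ℝ) ^ (1 - s))) :=
          ((Real.continuousAt_rpow_const 0 (1 - s) (Or.inr (by linarith))).tendsto).mono_left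
            nhdsWithin_le_nhds
        rw [Real.zero_rpow (by linarith : 1 - s ≠ 0)] at h1
        simpa using h1.const_mul lam
      refine squeeze_zero_norm' ?_ hB
      filter_upwards [eventually_mem_nhdsWithin] with t (ht : (0:ℝ) ≤ t)
      rcases eq_or_lt_of_le ht with rfl | ht0
      · simp [hg, Real.zero_rpow (by linarith : 1 - s ≠ 0)]
      · have htp : (0:ℝ) < t ^ (-s) := Real.rpow_pos_of_pos ht0 _
        rw [Real.norm_eq_abs, hg, abs_mul, abs_of_pos htp]
        have hnum : |Real.exp (-t * lam) - 1| ≤ t * lam := by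
          have := bal_abs_exp_le_self (mul_nonneg ht0.le hlam)
          rwa [← neg_mul] at this
        calc |Real.exp (-t * lam) - 1| * t ^ (-s) ≤ (t * lam) * t ^ (-s) := by gcongr
          _ = lam * t ^ (1 - s) := by
              rw [show (1:ℝ) - s = 1 + (-s) by ring, Real.rpow_add ht0, Real.rpow_one]
              ring
    -- limit at infinity
    have htop : Tendsto g atTop (𝓝 0) := by
      have hB : Tendsto (fun t : ℝ => t ^ (-s)) atTop (𝓝 0) :=
        tendsto_rpow_neg_atTop hs0
      refine squeeze_zero_norm' ?_ hB
      filter_upwards [eventually_gt_atTop (0:ℝ)] with t ht0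
      have htp : (0:ℝ) < t ^ (-s) := Real.rpow_pos_of_pos ht0 _
      rw [Real.norm_eq_abs, hg, abs_mul, abs_of_pos htp]
      have : |Real.exp (-t * lam) - 1| ≤ 1 := by
        have := bal_abs_exp_le_one (mul_nonneg ht0.le hlam)
        rwa [← neg_mul] at this
      calc |Real.exp (-t * lam) - 1| * t ^ (-s) ≤ 1 * t ^ (-s) := by gcongr
        _ = t ^ (-s) := one_mul _
    -- integrability of the pieces
    have hInt1 : IntegrableOn p1 (Ioi (0:ℝ)) volume := by
      have h := (integrableOn_rpow_mul_exp_neg_mul_rpow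
        (by linarith : (-1:ℝ) < -s) (one_pos : (0:ℝ) < 1) hlam').const_mul (-lam)
      refine MeasureTheory.IntegrableOn.congr_fun h (fun x hx => ?_) measurableSet_Ioi
      simp only [Real.rpow_one, neg_mul, mul_comm lam x, hp1]
      ring
    have hInt2 : IntegrableOn p2 (Ioi (0:ℝ)) volume := by
      have h := h_int.const_mul (-s)
      refine MeasureTheory.IntegrableOn.congr_fun h (fun x hx => ?_) measurableSet_Ioi
      have hx0 : (0:ℝ) < x := hx
      simp only [hp2]
      rw [show -s - 1 = -(s+1) by ring, Real.rpow_neg hx0.le, div_eq_mul_inv]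
      ring
    have hInt : IntegrableOn (fun t => p1 t + p2 t) (Ioi (0:ℝ)) volume := hInt1.add hInt2
    have hFTC : ∫ t in Ioi (0:ℝ), (p1 t + p2 t) = 0 - g 0 :=
      integral_Ioi_of_hasDerivAt_of_tendsto hcont hderiv hInt htop
    have hg0 : g 0 = 0 := by simp [hg]
    rw [hg0, sub_zero] at hFTC
    rw [integral_add hInt1 hInt2] at hFTC
    -- value of the first piece
    have hval1 : ∫ t in Ioi (0:ℝ), p1 t = -lam * ((1/lam) ^ (1-s) * Real.Gamma (1-s)) := by
      have h := integral_rpow_mul_exp_neg_mul_Ioi (by linarith : (0:ℝ) < 1 - s) hlam'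
      rw [← h, ← integral_const_mul]
      refine setIntegral_congr_fun measurableSet_Ioi (fun x hx => ?_)
      simp only [hp1, show (1:ℝ) - s - 1 = -s by ring, neg_mul, mul_comm lam x]
      ring
    -- value of the second piece
    have hval2 : ∫ t in Ioi (0:ℝ), p2 t
        = -s * ∫ t in Ioi (0:ℝ), (Real.exp (-t * lam) - 1) / t ^ (s + 1) := by
      rw [← integral_const_mul]
      refine setIntegral_congr_fun measurableSet_Ioi (fun x hx => ?_)
      have hx0 : (0:ℝ) < x := hx
      simp only [hp2]
      rw [show -s - 1 = -(s+1) by ring, Real.rpow_neg hx0.le, div_eq_mul_inv]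
      ring
    rw [hval1, hval2] at hFTC
    have hmulpow : lam ^ s * lam ^ (1 - s) = lam := by
      rw [← Real.rpow_add hlam']; norm_num
    have hpow_pos : (0:ℝ) < lam ^ (1 - s) := Real.rpow_pos_of_pos hlam' _
    have hlampow : lam * (1/lam) ^ (1-s) = lam ^ s := by
      rw [one_div, Real.inv_rpow hlam]
      field_simp
      linarith [hmulpow]
    have hG : Real.Gamma (1 - s) ≠ 0 := ne_of_gt (Real.Gamma_pos_of_pos (by linarith))
    have hI : ∫ t in Ioi (0:ℝ), (Real.exp (-t * lam) - 1) / t ^ (s + 1)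
        = -(lam ^ s * Real.Gamma (1-s)) / s := by
      have := hFTC
      rw [← hlampow]
      field_simp at this ⊢
      linarith [this]
    rw [hI]
    field_simp
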